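/- Let B(V, V, E) be a bipartite graph with left-vertex set V, right-vertex set V and edge set E ⊆ V × V. If M¹ and M² are two maximum matchings of B(V, V, E) with right- and left-unmatched vertex sets (U_R(M¹), U_L(M¹)) and (U_R(M²), U_L(M²)) respectively, then there exists a maximum matching M* of B(V, V, E) whose set of right-unmatched vertices is U_R(M¹) and whose set of left-unmatched vertices is U_L(M²). -/

import Mathlib

open Matrix

/-- Controllability matrix `[B, AB, …, A^{n-1}B]` (columns indexed by `Fin (card X) × U`). -/
def ctrbMatrix {X U : Type*} [Fintype X] [DecidableEq X]
    (A : Matrix X X ℝ) (B : Matrix X U ℝ) :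
    Matrix X (Fin (Fintype.card X) × U) ℝ :=
  fun i kj => (A ^ (kj.1 : ℕ) * B) i kj.2

/-- A real pair `(A,B)` is controllable if its controllability matrix has full rank. -/
def Controllable {X U : Type*} [Fintype X] [DecidableEq X] [Fintype U]
    (A : Matrix X X ℝ) (B : Matrix X U ℝ) : Prop :=
  (ctrbMatrix A B).rank = Fintype.card X

/-- `M` has the same sparsity pattern as the Boolean matrix `Mb`. -/
def SameSparsity {X Y : Type*} (M : Matrix X Y ℝ) (Mb : Matrix X Y Bool) : Prop :=
  ∀ i j, M i j = 0 ↔ Mb i j = false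

/-- Structural controllability of a structural (Boolean) pair. -/
def StructurallyControllable {X U : Type*} [Fintype X] [DecidableEq X] [Fintype U]
    (Ab : Matrix X X Bool) (Bb : Matrix X U Bool) : Prop :=
  ∃ A : Matrix X X ℝ, ∃ B : Matrix X U ℝ,
    SameSparsity A Ab ∧ SameSparsity B Bb ∧ Controllable A B

/-- Edge relation of the system digraph `D(Ā,B̄)`. -/
def sysDigraphRel {X U : Type*} (Ab : Matrix X X Bool) (Bb : Matrix X U Bool) :
    (X ⊕ U) → (X ⊕ U) → Prop :=
  fun v w => match v, w with
  | Sum.inl j, Sum.inl i => Ab i j = true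
  | Sum.inr k, Sum.inl i => Bb i k = true
  | _, Sum.inr _ => False

/-- A state vertex is input-reachable if some input vertex has a directed path to it. -/
def InputReachable {X U : Type*} (Ab : Matrix X X Bool) (Bb : Matrix X U Bool) (x : X) : Prop :=
  ∃ u : U, Relation.ReflTransGen (sysDigraphRel Ab Bb) (Sum.inr u) (Sum.inl x)

/-- Edge relation of the system bipartite graph `B(Ā,B̄)` (left = states ⊕ inputs, right = states). -/
def sysBipEdge {X U : Type*} (Ab : Matrix X X Bool) (Bb : Matrix X U Bool) :
    (X ⊕ U) → X → Prop :=
  fun v i => match v with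
  | Sum.inl j => Ab i j = true
  | Sum.inr k => Bb i k = true

/-- Edge relation of the state bipartite graph `B(Ā)`. -/
def stateBipEdge {X : Type*} (Ab : Matrix X X Bool) : X → X → Prop :=
  fun j i => Ab i j = true

/-- A matching of a bipartite graph with edge relation `E`: a set of edges sharing no
left vertex and no right vertex. -/
def IsMatching {α β : Type*} (E : α → β → Prop) (M : Set (α × β)) : Prop :=
  (∀ e ∈ M, E e.1 e.2) ∧
  (∀ e ∈ M, ∀ f ∈ M, e.1 = f.1 → e = f) ∧
  (∀ e ∈ M, ∀ f ∈ M, e.2 = f.2 → e = f)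

/-- Right vertices belonging to no edge of `M`. -/
def rightUnmatched {α β : Type*} (M : Set (α × β)) : Set β :=
  {b | ∀ e ∈ M, e.2 ≠ b}

/-- Left vertices belonging to no edge of `M`. -/
def leftUnmatched {α β : Type*} (M : Set (α × β)) : Set α :=
  {a | ∀ e ∈ M, e.1 ≠ a}

/-- A maximum matching: a matching of the largest cardinality. -/
def IsMaxMatching {α β : Type*} (E : α → β → Prop) (M : Set (α × β)) : Prop :=
  IsMatching E M ∧ ∀ M' : Set (α × β), IsMatching E M' → M'.ncard ≤ M.ncard

/-- `S` is a strongly connected component of the digraph with edge relation `R`. -/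
def IsSCC {V : Type*} (R : V → V → Prop) (S : Set V) : Prop :=
  S.Nonempty ∧ (∀ u ∈ S, ∀ v ∈ S, Relation.ReflTransGen R u v) ∧
  ∀ w : V, (∀ u ∈ S, Relation.ReflTransGen R u w ∧ Relation.ReflTransGen R w u) → w ∈ S

/-- An SCC is non-top linked if it has no incoming edge from outside. -/
def NonTopLinked {V : Type*} (R : V → V → Prop) (S : Set V) : Prop :=
  ∀ u v : V, R u v → v ∈ S → u ∈ S

/-- Dynamics pattern `(I_r ⊗ Ā') ∨ (Ē ⊗ H̄)` of a system of `r` similar subsystems. -/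
def simA {n : ℕ} (r : ℕ) (A' H : Matrix (Fin n) (Fin n) Bool)
    (E : Matrix (Fin r) (Fin r) Bool) :
    Matrix (Fin r × Fin n) (Fin r × Fin n) Bool :=
  fun q q' => ((if q.1 = q'.1 then A' q.2 q'.2 else false) || (E q.1 q'.1 && H q.2 q'.2))

/-- Input pattern `I_r ⊗ B̄'` of a system of `r` similar subsystems. -/
def simB {n p : ℕ} (r : ℕ) (B' : Matrix (Fin n) (Fin p) Bool) :
    Matrix (Fin r × Fin n) (Fin r × Fin p) Bool :=
  fun q k => if q.1 = k.1 then B' q.2 k.2 else false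

/-- Entrywise OR of Boolean matrices. -/
def orMat {X Y : Type*} (M N : Matrix X Y Bool) : Matrix X Y Bool :=
  fun i j => M i j || N i j

/-- Dynamics pattern of an interconnected system: diagonal blocks `Ā_i`,
off-diagonal blocks `Ē_{i,j}`. -/
def interA {r : ℕ} {n : Fin r → ℕ}
    (A : ∀ i, Matrix (Fin (n i)) (Fin (n i)) Bool)
    (E : ∀ i j, Matrix (Fin (n i)) (Fin (n j)) Bool) :
    Matrix (Σ i, Fin (n i)) (Σ i, Fin (n i)) Bool :=
  fun q q' => if h : q'.1 = q.1 then A q.1 q.2 (h ▸ q'.2) else E q.1 q'.1 q.2 q'.2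

/-- Input pattern of an interconnected system: block diagonal with blocks `B̄_i`. -/
def interB {r : ℕ} {n p : Fin r → ℕ}
    (B : ∀ i, Matrix (Fin (n i)) (Fin (p i)) Bool) :
    Matrix (Σ i, Fin (n i)) (Σ i, Fin (p i)) Bool :=
  fun q k => if h : k.1 = q.1 then B q.1 q.2 (h ▸ k.2) else false


section MDAux

variable {V : Type*} [Fintype V]

omit [Fintype V] in
private lemma leftUnmatched_eq_compl (M : Set (V × V)) :
    leftUnmatched M = (Prod.fst '' M)ᶜ := by
  ext a
  simp only [leftUnmatched, Set.mem_setOf_eq, Set.mem_compl_iff, Set.mem_image]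
  constructor
  · rintro h ⟨e, he, rfl⟩; exact h e he rfl
  · intro h e he hea; exact h ⟨e, he, hea⟩

omit [Fintype V] in
private lemma ncard_fst_image {E : V → V → Prop} {M : Set (V × V)}
    (h : IsMatching E M) : (Prod.fst '' M).ncard = M.ncard :=
  Set.ncard_image_of_injOn (fun e he f hf hef => h.2.1 e he f hf hef)

end MDAux

/-- Lemma 1 of the paper: given two maximum matchings `M¹, M²` of a
bipartite graph `B(V, V, E)`, there is a maximum matching whose right-unmatched vertices
are those of `M¹` and whose left-unmatched vertices are those of `M²`. -/
theorem exists_maxMatching_mixing_unmatched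
    {V : Type*} [Fintype V] (E : V → V → Prop) (M1 M2 : Set (V × V))
    (h1 : IsMaxMatching E M1) (h2 : IsMaxMatching E M2) :
    ∃ M : Set (V × V), IsMaxMatching E M ∧
      rightUnmatched M = rightUnmatched M1 ∧ leftUnmatched M = leftUnmatched M2 := by
  classical
  have hcard12 : M1.ncard = M2.ncard :=
    le_antisymm (h2.2 M1 h1.1) (h1.2 M2 h2.1)
  set S : Set (Set (V × V)) :=
    {M | IsMaxMatching E M ∧ rightUnmatched M = rightUnmatched M1} with hSdef
  have hM1S : M1 ∈ S := ⟨h1, rfl⟩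
  obtain ⟨M, hMS, hmax⟩ := Set.Finite.exists_maximalFor
    (fun M => (M ∩ M2).ncard) S (Set.toFinite S) ⟨M1, hM1S⟩
  obtain ⟨hMmax, hMright⟩ := hMS
  have hMcard : M.ncard = M1.ncard :=
    le_antisymm (h1.2 M hMmax.1) (hMmax.2 M1 h1.1)
  -- key claim: every M2-matched left vertex is M-matched
  have hsub : Prod.fst '' M2 ⊆ Prod.fst '' M := by
    rintro a ⟨e2, he2, rfl⟩
    by_contra ha'
    have ha : ∀ e ∈ M, e.1 ≠ e2.1 := by
      intro e he hea; exact ha' ⟨e, he, hea⟩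
    by_cases hb : ∃ e ∈ M, e.2 = e2.2
    · -- swap argument: replace the M-edge at e2.2 by e2
      obtain ⟨e, he, heb⟩ := hb
      set M' : Set (V × V) := insert e2 (M \ {e}) with hM'def
      have he2M : e2 ∉ M := fun h => ha e2 h rfl
      have he2M' : e2 ∉ M \ {e} := fun h => he2M h.1
      have hM'match : IsMatching E M' := by
        refine ⟨?_, ?_, ?_⟩
        · rintro g (hge | hg)
          · rw [hge]; exact h2.1.1 e2 he2
          · exact hMmax.1.1 g hg.1
        · rintro g (hge | hg) f (hfe | hf) hgf
          · rw [hge, hfe]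
          · exact absurd (hgf.symm.trans (congrArg Prod.fst hge)) (ha f hf.1)
          · exact absurd (hgf.trans (congrArg Prod.fst hfe)) (ha g hg.1)
          · exact hMmax.1.2.1 g hg.1 f hf.1 hgf
        · rintro g (hge | hg) f (hfe | hf) hgf
          · rw [hge, hfe]
          · exact absurd (hMmax.1.2.2 f hf.1 e he
              ((hgf.symm.trans (congrArg Prod.snd hge)).trans heb.symm)) hf.2
          · exact absurd (hMmax.1.2.2 g hg.1 e he
              ((hgf.trans (congrArg Prod.snd hfe)).trans heb.symm)) hg.2
          · exact hMmax.1.2.2 g hg.1 f hf.1 hgf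
      have hM'card : M'.ncard = M.ncard := by
        rw [hM'def, Set.ncard_insert_of_notMem he2M' (Set.toFinite _),
          Set.ncard_diff_singleton_add_one he (Set.toFinite _)]
      have hM'right : rightUnmatched M' = rightUnmatched M := by
        ext b; simp only [rightUnmatched, Set.mem_setOf_eq]
        constructor
        · intro h g hg
          by_cases hge : g = e
          · have := h e2 (Set.mem_insert _ _)
            rw [hge, heb]; exact this
          · exact h g (Set.mem_insert_of_mem _ ⟨hg, hge⟩)
        · rintro h g (hge | hg)
          · rw [hge, ← heb]; exact h e he
          · exact h g hg.1
      have hM'S : M' ∈ S := by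
        refine ⟨⟨hM'match, ?_⟩, hM'right.trans hMright⟩
        intro N hN; rw [hM'card]; exact hMmax.2 N hN
      -- but M' has strictly larger overlap with M2
      have heM2 : e ∉ M2 := by
        intro heM2
        have : e = e2 := h2.1.2.2 e heM2 e2 he2 heb
        exact ha e he (by rw [this])
      have hinter : M' ∩ M2 = insert e2 (M ∩ M2) := by
        rw [hM'def]
        ext g
        simp only [Set.mem_inter_iff, Set.mem_insert_iff, Set.mem_diff,
          Set.mem_singleton_iff]
        constructor
        · rintro ⟨hge | ⟨hg, -⟩, hg2⟩
          · exact Or.inl hge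
          · exact Or.inr ⟨hg, hg2⟩
        · rintro (hge | ⟨hg, hg2⟩)
          · rw [hge]; exact ⟨Or.inl rfl, he2⟩
          · exact ⟨Or.inr ⟨hg, fun hgee => heM2 (hgee ▸ hg2)⟩, hg2⟩
      have he2MM2 : e2 ∉ M ∩ M2 := fun h => he2M h.1
      have hΦ : (M' ∩ M2).ncard = (M ∩ M2).ncard + 1 := by
        rw [hinter, Set.ncard_insert_of_notMem he2MM2 (Set.toFinite _)]
      have : (M' ∩ M2).ncard ≤ (M ∩ M2).ncard :=
        hmax hM'S (by show (M ∩ M2).ncard ≤ (M' ∩ M2).ncard; omega)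
      omega
    · -- e2 could be added to M, contradicting maximality
      push_neg at hb
      have he2M : e2 ∉ M := fun h => ha e2 h rfl
      have hins : IsMatching E (insert e2 M) := by
        refine ⟨?_, ?_, ?_⟩
        · rintro g (hge | hg)
          · rw [hge]; exact h2.1.1 e2 he2
          · exact hMmax.1.1 g hg
        · rintro g (hge | hg) f (hfe | hf) hgf
          · rw [hge, hfe]
          · exact absurd (hgf.symm.trans (congrArg Prod.fst hge)) (ha f hf)
          · exact absurd (hgf.trans (congrArg Prod.fst hfe)) (ha g hg)
          · exact hMmax.1.2.1 g hg f hf hgf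
        · rintro g (hge | hg) f (hfe | hf) hgf
          · rw [hge, hfe]
          · exact absurd (hgf.symm.trans (congrArg Prod.snd hge)) (hb f hf)
          · exact absurd (hgf.trans (congrArg Prod.snd hfe)) (hb g hg)
          · exact hMmax.1.2.2 g hg f hf hgf
      have := hMmax.2 (insert e2 M) hins
      rw [Set.ncard_insert_of_notMem he2M (Set.toFinite _)] at this
      omega
  have hleft : Prod.fst '' M2 = Prod.fst '' M := by
    exact Set.eq_of_subset_of_ncard_le hsub
      (by rw [ncard_fst_image hMmax.1, ncard_fst_image h2.1, hMcard, hcard12])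
      (Set.toFinite _)
  exact ⟨M, hMmax, hMright, by rw [leftUnmatched_eq_compl, leftUnmatched_eq_compl, hleft]⟩
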